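/- Let R be a (not necessarily unital) ring, let a ∈ R, and let S be the subring of R generated by the single element a. Then S is a Jacobson radical ring if and only if a is nilpotent. -/

import Mathlib

/-- An iterated-product power for non-unital rings: `ppow a n = a ^ (n + 1)`. -/
def ppow {R : Type*} [NonUnitalRing R] (a : R) : ℕ → R
  | 0 => a
  | n + 1 => ppow a n * a

/-- An element of a (possibly non-unital) ring is nilpotent if some positive power vanishes. -/
def IsNilElem {R : Type*} [NonUnitalRing R] (a : R) : Prop :=
  ∃ n : ℕ, ppow a n = 0

/-- An element `a` of a (possibly non-unital) ring is quasi-regular if it has a quasi-inverse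
`b`, i.e. `a + b + a * b = a + b + b * a = 0`. -/
def IsQuasiRegular {R : Type*} [NonUnitalRing R] (a : R) : Prop :=
  ∃ b : R, a + b + a * b = 0 ∧ a + b + b * a = 0

/-- A (possibly non-unital) ring is a Jacobson radical ring if all its elements are
quasi-regular. -/
def IsJacobsonRadicalRing (R : Type*) [NonUnitalRing R] : Prop :=
  ∀ a : R, IsQuasiRegular a

open Polynomial Unitization

section Aux
variable {R : Type*} [NonUnitalRing R]

instance : IsJacobsonRing ℤ := by
  rw [isJacobsonRing_iff_prime_eq]
  intro P hP
  by_cases hbot : P = ⊥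
  · subst hbot
    refine le_antisymm (fun x hx => ?_) Ideal.le_jacobson
    rw [Ideal.mem_jacobson_bot] at hx
    have h1 := Int.isUnit_iff.mp (hx 1)
    have h2 := Int.isUnit_iff.mp (hx (-1))
    rw [Ideal.mem_bot]
    omega
  · haveI := hP
    haveI := IsPrime.to_maximal_ideal hbot
    exact Ideal.jacobson_eq_self_of_isMaximal

lemma ppow_succ_left (x : R) (n : ℕ) : ppow x (n + 1) = x * ppow x n := by
  induction n with
  | zero => rfl
  | succ n ih =>
    calc ppow x (n + 1 + 1) = ppow x (n + 1) * x := rfl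
      _ = x * ppow x n * x := by rw [ih]
      _ = x * (ppow x n * x) := mul_assoc _ _ _
      _ = x * ppow x (n + 1) := rfl

lemma inr_ppow (a : R) (n : ℕ) :
    (↑(ppow a n) : Unitization ℤ R) = (↑a : Unitization ℤ R) ^ (n + 1) := by
  induction n with
  | zero => simp [ppow]
  | succ n ih =>
    show (↑(ppow a n * a) : Unitization ℤ R) = _
    rw [Unitization.inr_mul, ih, ← pow_succ]

lemma coe_ppow (S : NonUnitalSubring R) (x : S) (n : ℕ) :
    ((ppow x n : S) : R) = ppow (x : R) n := by
  induction n with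
  | zero => rfl
  | succ n ih =>
    show ((ppow x n : S) : R) * (x : R) = ppow (x : R) n * x
    rw [ih]

lemma fst_aeval (a : R) (f : ℤ[X]) :
    (Polynomial.aeval (↑a : Unitization ℤ R) f).fst = f.coeff 0 := by
  have h := Polynomial.aeval_algHom_apply (Unitization.fstHom ℤ R) (↑a : Unitization ℤ R) f
  simp only [Unitization.fstHom_apply, Unitization.fst_inr] at h
  rw [← h]
  simp [Polynomial.coeff_zero_eq_eval_zero]

lemma snd_aeval_mem (a : R) (f : ℤ[X]) :
    (Polynomial.aeval (↑a : Unitization ℤ R) f).snd ∈ NonUnitalSubring.closure ({a} : Set R) := by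
  induction f using Polynomial.induction_on with
  | C n =>
    rw [Polynomial.aeval_C, Unitization.algebraMap_eq_inl, Unitization.snd_inl]
    exact zero_mem _
  | add p q hp hq => rw [map_add, Unitization.snd_add]; exact add_mem hp hq
  | monomial n c ih =>
    have ha : a ∈ NonUnitalSubring.closure ({a} : Set R) :=
      NonUnitalSubring.subset_closure rfl
    rw [pow_succ, ← mul_assoc, map_mul, Polynomial.aeval_X, Unitization.snd_mul,
      Unitization.fst_inr, Unitization.snd_inr, zero_smul, add_zero]
    exact add_mem (zsmul_mem ha _) (mul_mem ih ha)

lemma exists_aeval (a x : R) (hx : x ∈ NonUnitalSubring.closure ({a} : Set R)) :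
    ∃ f : ℤ[X], Polynomial.aeval (↑a : Unitization ℤ R) f = ↑x := by
  induction hx using NonUnitalSubring.closure_induction with
  | mem y hy => exact ⟨X, by rw [Set.mem_singleton_iff.mp hy, Polynomial.aeval_X]⟩
  | zero => exact ⟨0, by simp⟩
  | add y z _ _ hy hz =>
    obtain ⟨f, hf⟩ := hy; obtain ⟨g, hg⟩ := hz
    exact ⟨f + g, by rw [map_add, hf, hg, Unitization.inr_add]⟩
  | neg y _ hy =>
    obtain ⟨f, hf⟩ := hy
    exact ⟨-f, by rw [map_neg, hf, Unitization.inr_neg]⟩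
  | mul y z _ _ hy hz =>
    obtain ⟨f, hf⟩ := hy; obtain ⟨g, hg⟩ := hz
    exact ⟨f * g, by rw [map_mul, hf, hg, Unitization.inr_mul]⟩

lemma isQuasiRegular_of_isNilElem {A : Type*} [NonUnitalRing A] {x : A}
    (h : IsNilElem x) : IsQuasiRegular x := by
  obtain ⟨n, hn⟩ := h
  set T : A := ∑ i ∈ Finset.range (n + 1), ((-1 : ℤ) ^ i) • ppow x i with hT
  have hneg : ∀ i : ℕ, ((-1 : ℤ) ^ (i + 1)) • ppow x (i + 1)
      = -(((-1 : ℤ) ^ i) • ppow x (i + 1)) := by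
    intro i; rw [pow_succ, mul_smul]; simp
  have h2 : T = -(∑ i ∈ Finset.range n, ((-1 : ℤ) ^ i) • ppow x (i + 1)) + x := by
    rw [hT, Finset.sum_range_succ' (fun i => ((-1 : ℤ) ^ i) • ppow x i) n]
    simp only [hneg, Finset.sum_neg_distrib, pow_zero, one_smul]
    rfl
  have key : ∑ i ∈ Finset.range (n + 1), ((-1 : ℤ) ^ i) • ppow x (i + 1) = -T + x := by
    have hz : ppow x (n + 1) = 0 := by show ppow x n * x = 0; rw [hn, zero_mul]
    rw [Finset.sum_range_succ, hz, smul_zero, add_zero, h2]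
    abel
  refine ⟨-T, ?_, ?_⟩
  · have hxT : x * T = -T + x := by
      rw [hT, Finset.mul_sum, ← key]
      refine Finset.sum_congr rfl fun i _ => ?_
      rw [mul_smul_comm, ← ppow_succ_left]
    rw [mul_neg, hxT]; abel
  · have hTx : T * x = -T + x := by
      rw [hT, Finset.sum_mul, ← key]
      refine Finset.sum_congr rfl fun i _ => ?_
      rw [smul_mul_assoc]; rfl
    rw [neg_mul, hTx]; abel

end Aux

/-- The subring generated by a single element `a` of a (possibly non-unital) ring is a Jacobson
radical ring if and only if `a` is nilpotent. -/
theorem isJacobsonRadicalRing_closure_singleton_iff_isNilElem {R : Type*} [NonUnitalRing R]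
    (a : R) :
    IsJacobsonRadicalRing (NonUnitalSubring.closure ({a} : Set R)) ↔ IsNilElem a := by
  constructor
  · intro h
    set φ : ℤ[X] →+* Unitization ℤ R :=
      ((Polynomial.aeval (↑a : Unitization ℤ R)).toRingHom :
        ℤ[X] →+* Unitization ℤ R) with hφ
    set I : Ideal ℤ[X] := RingHom.ker φ with hI
    have hmem : Ideal.Quotient.mk I X ∈ Ideal.jacobson (⊥ : Ideal (ℤ[X] ⧸ I)) := by
      rw [Ideal.mem_jacobson_bot]
      intro y
      obtain ⟨f, rfl⟩ := Ideal.Quotient.mk_surjective y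
      have hg0 : (X * f).coeff 0 = 0 := by simp
      have ht : ((Polynomial.aeval (↑a : Unitization ℤ R)) (X * f)).snd ∈
          NonUnitalSubring.closure ({a} : Set R) := snd_aeval_mem a _
      set t := ((Polynomial.aeval (↑a : Unitization ℤ R)) (X * f)).snd with hts
      have hgt : (Polynomial.aeval (↑a : Unitization ℤ R)) (X * f) = (↑t : Unitization ℤ R) := by
        apply Unitization.ext
        · rw [fst_aeval, hg0, Unitization.fst_inr]
        · rw [Unitization.snd_inr]
      obtain ⟨b, hb1, _⟩ := h ⟨t, ht⟩
      have hb1' : t + (b : R) + t * (b : R) = 0 := congrArg Subtype.val hb1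
      obtain ⟨q, hq⟩ := exists_aeval a (b : R) b.2
      have hXf : Ideal.Quotient.mk I X * Ideal.Quotient.mk I f + 1
          = Ideal.Quotient.mk I (X * f + 1) := by rw [map_add, map_mul, map_one]
      rw [hXf]
      apply IsUnit.of_mul_eq_one (Ideal.Quotient.mk I (q + 1))
      rw [← map_mul, ← map_one (Ideal.Quotient.mk I), Ideal.Quotient.mk_eq_mk_iff_sub_mem]
      rw [hI, RingHom.mem_ker]
      rw [map_sub, map_mul, map_add, map_add, map_one,
        show φ (X * f) = (↑t : Unitization ℤ R) from hgt,
        show φ q = (↑(b : R) : Unitization ℤ R) from hq]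
      have expand : ((↑t : Unitization ℤ R) + 1) * ((↑(b : R) : Unitization ℤ R) + 1)
          = (↑(t * (b : R) + t + (b : R)) : Unitization ℤ R) + 1 := by
        rw [Unitization.inr_add, Unitization.inr_add, Unitization.inr_mul]
        noncomm_ring
      have hzero : t * (b : R) + t + (b : R) = 0 := by
        rw [show t * (b : R) + t + (b : R) = t + (b : R) + t * (b : R) from by abel, hb1']
      rw [expand, hzero, Unitization.inr_zero, zero_add, sub_self]
    have hnil : IsNilpotent (Ideal.Quotient.mk I X) := by
      have h2 := Ideal.radical_eq_jacobson (⊥ : Ideal (ℤ[X] ⧸ I))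
      have h3 : Ideal.Quotient.mk I X ∈ Ideal.radical (⊥ : Ideal (ℤ[X] ⧸ I)) := h2 ▸ hmem
      rwa [← Submodule.zero_eq_bot, ← nilradical, mem_nilradical] at h3
    obtain ⟨n, hn⟩ := hnil
    match n, hn with
    | 0, hn =>
      exfalso
      rw [pow_zero, ← map_one (Ideal.Quotient.mk I), Ideal.Quotient.eq_zero_iff_mem,
        hI, RingHom.mem_ker, map_one] at hn
      exact one_ne_zero hn
    | m + 1, hn =>
      refine ⟨m, ?_⟩
      rw [← map_pow, Ideal.Quotient.eq_zero_iff_mem, hI, RingHom.mem_ker] at hn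
      have hn' : ((Polynomial.aeval (↑a : Unitization ℤ R)) (X ^ (m + 1))) = 0 := hn
      rw [Polynomial.aeval_X_pow, ← inr_ppow] at hn'
      exact Unitization.inr_injective (hn'.trans (Unitization.inr_zero ℤ).symm)
  · rintro ⟨n, hn⟩ x
    apply isQuasiRegular_of_isNilElem
    obtain ⟨f, hf⟩ := exists_aeval a (x : R) x.2
    have hc0 : f.coeff 0 = 0 := by
      have h1 := fst_aeval a f
      rw [hf, Unitization.fst_inr] at h1
      exact h1.symm
    have hfac : X * f.divX = f := by
      have h2 := Polynomial.X_mul_divX_add f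
      rwa [hc0, map_zero, add_zero] at h2
    have hcomm : Commute (↑a : Unitization ℤ R)
        ((Polynomial.aeval (↑a : Unitization ℤ R)) f.divX) := by
      have h3 := (Commute.all X f.divX).map
        ((Polynomial.aeval (↑a : Unitization ℤ R)).toRingHom)
      simpa using h3
    have hpow : ((↑(x : R) : Unitization ℤ R)) ^ (n + 1) = 0 := by
      rw [← hf, ← hfac, map_mul, Polynomial.aeval_X, Commute.mul_pow (M := Unitization ℤ R) hcomm, ← inr_ppow, hn,
        Unitization.inr_zero, zero_mul]
    rw [← inr_ppow] at hpow
    have hz : ppow ((x : R)) n = 0 :=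
      Unitization.inr_injective (hpow.trans (Unitization.inr_zero ℤ).symm)
    refine ⟨n, Subtype.ext ?_⟩
    rw [coe_ppow]
    exact hz
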